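/- arXiv:1409.3459 — 2 statements merged into one kernel-verified Lean document; each statement's English description precedes it below -/
import Mathlib

section
/- For any set A in a topological space, the semi-boundary operator stabilizes after two iterations: sbd (sbd (sbd A)) = sbd (sbd A) (Theorem 3.18). -/
open Set Topology

variable {X : Type*} [TopologicalSpace X]

/-- A set is semi-open if it lies between an open set and its closure. -/
def SemiOpen (A : Set X) : Prop :=
  ∃ U : Set X, IsOpen U ∧ U ⊆ A ∧ A ⊆ closure U

/-- A set is semi-closed if its complement is semi-open. -/
def SemiClosed (A : Set X) : Prop :=
  SemiOpen Aᶜ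

/-- Semi-interior: the union of all semi-open subsets of `A`. -/
def sint (A : Set X) : Set X :=
  ⋃₀ {S : Set X | SemiOpen S ∧ S ⊆ A}

/-- Semi-closure: the intersection of all semi-closed supersets of `A`. -/
def scl (A : Set X) : Set X :=
  ⋂₀ {C : Set X | SemiClosed C ∧ A ⊆ C}

/-- Semi-exterior: the semi-interior of the complement. -/
def sext (A : Set X) : Set X :=
  sint Aᶜ

/-- Semi-boundary. -/
def sbd (A : Set X) : Set X :=
  (sint A ∪ sext A)ᶜ
lemma semiOpen_sUnion {𝒮 : Set (Set X)} (h : ∀ S ∈ 𝒮, SemiOpen S) :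
    SemiOpen (⋃₀ 𝒮) := by
  choose U hUo hU1 hU2 using h
  refine ⟨⋃ (S : Set X) (hS : S ∈ 𝒮), U S hS, isOpen_iUnion fun S => isOpen_iUnion fun hS => hUo S hS, ?_, ?_⟩
  · exact iUnion_subset fun S => iUnion_subset fun hS => (hU1 S hS).trans (subset_sUnion_of_mem hS)
  · intro x hx
    obtain ⟨S, hS, hxS⟩ := hx
    exact closure_mono (subset_iUnion_of_subset S (subset_iUnion_of_subset hS subset_rfl)) (hU2 S hS hxS)

lemma semiOpen_sint (A : Set X) : SemiOpen (sint A) :=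
  semiOpen_sUnion fun _ hS => hS.1

lemma sint_subset (A : Set X) : sint A ⊆ A :=
  sUnion_subset fun _ hS => hS.2

lemma subset_sint {S A : Set X} (hS : SemiOpen S) (h : S ⊆ A) : S ⊆ sint A :=
  subset_sUnion_of_mem ⟨hS, h⟩

lemma scl_eq_compl_sint_compl (A : Set X) : scl A = (sint Aᶜ)ᶜ := by
  ext x
  constructor
  · intro h hx
    obtain ⟨S, ⟨hS, hSA⟩, hxS⟩ := hx
    exact (h Sᶜ ⟨by simpa [SemiClosed] using hS, subset_compl_comm.mp hSA⟩) hxS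
  · intro h C hC
    by_contra hxC
    exact h ⟨Cᶜ, ⟨hC.1, compl_subset_compl.mpr hC.2⟩, hxC⟩

lemma sbd_eq (A : Set X) : sbd A = (sint A)ᶜ ∩ (sint Aᶜ)ᶜ := by
  simp [sbd, sext, compl_union]

lemma semiClosed_sbd (A : Set X) : SemiClosed (sbd A) := by
  have : (sbd A)ᶜ = ⋃₀ {sint A, sint Aᶜ} := by
    rw [sbd, compl_compl, sUnion_pair, sext]
  rw [SemiClosed, this]
  exact semiOpen_sUnion (by rintro S (rfl | rfl) <;> exact semiOpen_sint _)

lemma sbd_of_semiClosed {B : Set X} (hB : SemiClosed B) :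
    sbd B = B ∩ (sint B)ᶜ := by
  rw [sbd_eq, ← scl_eq_compl_sint_compl]
  have hscl : scl B = B := by
    apply subset_antisymm
    · exact sInter_subset_of_mem ⟨hB, subset_rfl⟩
    · exact subset_sInter fun C hC => hC.2
  rw [hscl, inter_comm]

lemma sint_sbd_of_semiClosed {B : Set X} (hB : SemiClosed B) :
    sint (sbd B) = ∅ := by
  rw [sbd_of_semiClosed hB]
  apply eq_empty_of_subset_empty
  apply sUnion_subset
  rintro S ⟨hS, hsub⟩
  have h1 : S ⊆ sint B := subset_sint hS (hsub.trans inter_subset_left)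
  have h2 : S ⊆ (sint B)ᶜ := hsub.trans inter_subset_right
  intro x hx
  exact (h2 hx) (h1 hx)

theorem sbd_sbd_sbd (A : Set X) : sbd (sbd (sbd A)) = sbd (sbd A) := by
  set B := sbd A
  have hB : SemiClosed B := semiClosed_sbd A
  have hC : SemiClosed (sbd B) := semiClosed_sbd B
  rw [sbd_of_semiClosed hC, sint_sbd_of_semiClosed hB, compl_empty, inter_univ]
end

section
/- For any set A in a topological space, sbd (sint A) ⊆ sbd A (Theorem 3.19(2)). -/
open Set Topology

variable {X : Type*} [TopologicalSpace X]

lemma sint_mono {A B : Set X} (h : A ⊆ B) : sint A ⊆ sint B :=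
  sUnion_subset_sUnion fun S hS => ⟨hS.1, hS.2.trans h⟩

lemma sint_idem (A : Set X) : sint (sint A) = sint A := by
  apply subset_antisymm (sint_subset _)
  exact subset_sUnion_of_mem ⟨semiOpen_sint A, subset_rfl⟩

theorem sbd_sint_subset (A : Set X) : sbd (sint A) ⊆ sbd A := by
  unfold sbd sext
  apply compl_subset_compl.2
  apply union_subset_union
  · rw [sint_idem]
  · exact sint_mono (compl_subset_compl.2 (sint_subset A))
end
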